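/- Let r be a real random variable with P(r ≥ -1) = 1, P(r > 0) > 0, P(r < 0) > 0, and E[(ln(1+r))²] < ∞. Then the function g_r(f) = E[ln(1 + f r)] is twice differentiable on (0,1) with g_r'(f) = E[r/(1 + f r)] and g_r''(f) = −E[r²/(1 + f r)²], and the function υ_r(f) = Var[ln(1 + f r)] is differentiable on (0,1) with (1/2)·υ_r'(f) = E[r·ln(1 + f r)/(1 + f r)] − E[ln(1 + f r)]·E[r/(1 + f r)]. -/

import Mathlib

open MeasureTheory ProbabilityTheory Real Filter Topology

lemma krl_pos_aux {x ρ : ℝ} (hρ : -1 ≤ ρ) (hx0 : 0 < x) (hx1 : x < 1) : 0 < 1 + x * ρ := by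
  nlinarith

lemma krl_frac_bound {x ρ a b : ℝ} (hρ : -1 ≤ ρ) (ha : 0 < a) (hb : b < 1)
    (hax : a ≤ x) (hxb : x ≤ b) :
    |ρ / (1 + x * ρ)| ≤ max (1 / a) (1 / (1 - b)) := by
  have hx0 : 0 < x := lt_of_lt_of_le ha hax
  have hx1 : x < 1 := lt_of_le_of_lt hxb hb
  have hpos : 0 < 1 + x * ρ := krl_pos_aux hρ hx0 hx1
  rcases le_or_gt 0 ρ with hρ0 | hρ0
  · have h1 : ρ / (1 + x * ρ) ≤ 1 / x := by
      rw [div_le_div_iff₀ hpos hx0]; nlinarith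
    have h2 : (1 : ℝ) / x ≤ 1 / a := one_div_le_one_div_of_le ha hax
    rw [abs_of_nonneg (div_nonneg hρ0 hpos.le)]
    exact le_trans (le_trans h1 h2) (le_max_left _ _)
  · have h1 : 1 - b ≤ 1 + x * ρ := by nlinarith
    have h2 : |ρ| ≤ 1 := abs_le.2 ⟨hρ, by linarith⟩
    have : |ρ / (1 + x * ρ)| = |ρ| / (1 + x * ρ) := by
      rw [abs_div, abs_of_pos hpos]
    rw [this]
    refine le_trans (div_le_div₀ (by norm_num) h2 (by linarith) h1) (le_max_right _ _)

lemma krl_log_bound {x ρ b : ℝ} (hρ : -1 ≤ ρ) (hx0 : 0 < x) (hxb : x ≤ b) (hb : b < 1) :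
    |Real.log (1 + x * ρ)| ≤ |Real.log (1 + ρ)| + |Real.log (1 - b)| := by
  have hx1 : x < 1 := lt_of_le_of_lt hxb hb
  rcases le_or_gt 0 ρ with hρ0 | hρ0
  · have h1 : (1:ℝ) ≤ 1 + x * ρ := by nlinarith
    have h2 : 1 + x * ρ ≤ 1 + ρ := by nlinarith
    rw [abs_of_nonneg (Real.log_nonneg h1)]
    have := Real.log_le_log (by linarith) h2
    have h3 : Real.log (1 + ρ) ≤ |Real.log (1 + ρ)| := le_abs_self _
    have h4 : (0:ℝ) ≤ |Real.log (1 - b)| := abs_nonneg _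
    linarith
  · have hb0 : 0 < 1 - b := by linarith
    have h1 : 1 - b ≤ 1 + x * ρ := by nlinarith
    have h2 : 1 + x * ρ ≤ 1 := by nlinarith
    have hl1 : Real.log (1 + x * ρ) ≤ 0 := Real.log_nonpos (by linarith) h2
    have hl2 : Real.log (1 - b) ≤ Real.log (1 + x * ρ) := Real.log_le_log hb0 h1
    have hl3 : Real.log (1 - b) ≤ 0 := Real.log_nonpos hb0.le (by linarith)
    rw [abs_of_nonpos hl1]
    rw [abs_of_nonpos hl3]
    have h4 : (0:ℝ) ≤ |Real.log (1 + ρ)| := abs_nonneg _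
    linarith

lemma krl_deriv_log {ρ x : ℝ} (h : 0 < 1 + x * ρ) :
    HasDerivAt (fun y => Real.log (1 + y * ρ)) (ρ / (1 + x * ρ)) x := by
  have h1 : HasDerivAt (fun y : ℝ => 1 + y * ρ) ρ x := by
    simpa using ((hasDerivAt_id x).mul_const ρ).const_add 1
  exact h1.log h.ne'

lemma krl_deriv_frac {ρ x : ℝ} (h : 0 < 1 + x * ρ) :
    HasDerivAt (fun y => ρ / (1 + y * ρ)) (-(ρ ^ 2 / (1 + x * ρ) ^ 2)) x := by
  have h1 : HasDerivAt (fun y : ℝ => 1 + y * ρ) ρ x := by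
    simpa using ((hasDerivAt_id x).mul_const ρ).const_add 1
  have := (hasDerivAt_const x ρ).fun_div h1 h.ne'
  exact this.congr_deriv (by ring)

lemma krl_deriv_logsq {ρ x : ℝ} (h : 0 < 1 + x * ρ) :
    HasDerivAt (fun y => Real.log (1 + y * ρ) ^ 2)
      (2 * Real.log (1 + x * ρ) * (ρ / (1 + x * ρ))) x := by
  simpa using (krl_deriv_log h).fun_pow 2

theorem growth_rate_and_variance_derivatives
    {Ω : Type*} [MeasurableSpace Ω] (P : Measure Ω) [IsProbabilityMeasure P]
    (r : Ω → ℝ) (hmeas : Measurable r)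
    (h1 : ∀ᵐ ω ∂P, -1 ≤ r ω)
    (hpos : 0 < P {ω | 0 < r ω})
    (hneg : 0 < P {ω | r ω < 0})
    (hsq : Integrable (fun ω => (Real.log (1 + r ω)) ^ 2) P) :
    ∀ f ∈ Set.Ioo (0 : ℝ) 1,
      HasDerivAt (fun x => ∫ ω, Real.log (1 + x * r ω) ∂P)
        (∫ ω, r ω / (1 + f * r ω) ∂P) f
      ∧ HasDerivAt (fun x => ∫ ω, r ω / (1 + x * r ω) ∂P)
        (-∫ ω, (r ω) ^ 2 / (1 + f * r ω) ^ 2 ∂P) f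
      ∧ HasDerivAt (fun x => variance (fun ω => Real.log (1 + x * r ω)) P)
        (2 * ((∫ ω, r ω * Real.log (1 + f * r ω) / (1 + f * r ω) ∂P)
          - (∫ ω, Real.log (1 + f * r ω) ∂P) * (∫ ω, r ω / (1 + f * r ω) ∂P))) f := by
  -- measurability
  have hmlog : ∀ x : ℝ, AEStronglyMeasurable (fun ω => Real.log (1 + x * r ω)) P := fun x =>
    (Real.measurable_log.comp (measurable_const.add (measurable_const.mul hmeas))).aestronglyMeasurable
  have hmfrac : ∀ x : ℝ, AEStronglyMeasurable (fun ω => r ω / (1 + x * r ω)) P := fun x =>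
    (hmeas.div (measurable_const.add (measurable_const.mul hmeas))).aestronglyMeasurable
  -- L² and L¹ of log(1+r)
  have hmlog1 : AEStronglyMeasurable (fun ω => Real.log (1 + r ω)) P :=
    (Real.measurable_log.comp (measurable_const.add hmeas)).aestronglyMeasurable
  have hlog2 : MemLp (fun ω => Real.log (1 + r ω)) 2 P :=
    (memLp_two_iff_integrable_sq hmlog1).2 hsq
  have hlog1 : Integrable (fun ω => Real.log (1 + r ω)) P :=
    hlog2.integrable (by norm_num)
  -- Memℒp 2 of log(1+x r) for every x ∈ (0,1)
  have hMem : ∀ x ∈ Set.Ioo (0:ℝ) 1, MemLp (fun ω => Real.log (1 + x * r ω)) 2 P := by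
    intro x hx
    refine (memLp_two_iff_integrable_sq (hmlog x)).2 ?_
    refine Integrable.mono ((hsq.const_mul 2).add
      (integrable_const (2 * |Real.log (1 - x)| ^ 2)))
      ((Real.measurable_log.comp (measurable_const.add
        (measurable_const.mul hmeas))).pow_const 2).aestronglyMeasurable ?_
    filter_upwards [h1] with ω hω
    have hb := krl_log_bound hω hx.1 (le_refl x) hx.2
    have h2 : |Real.log (1 + x * r ω)| ^ 2 ≤
        2 * (Real.log (1 + r ω)) ^ 2 + 2 * |Real.log (1 - x)| ^ 2 := by
      nlinarith [abs_nonneg (Real.log (1 + x * r ω)), abs_nonneg (Real.log (1 + r ω)),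
        abs_nonneg (Real.log (1 - x)), sq_abs (Real.log (1 + r ω)),
        sq_nonneg (|Real.log (1 + r ω)| - |Real.log (1 - x)|)]
    calc ‖Real.log (1 + x * r ω) ^ 2‖ = |Real.log (1 + x * r ω)| ^ 2 := by
          rw [Real.norm_eq_abs, abs_pow]
      _ ≤ 2 * (Real.log (1 + r ω)) ^ 2 + 2 * |Real.log (1 - x)| ^ 2 := h2
      _ ≤ _ := by simp only [Pi.add_apply, Real.norm_eq_abs]; exact le_abs_self _
  intro f hf
  obtain ⟨hf0, hf1⟩ := hf
  set b : ℝ := (1 + f) / 2 with hb_def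
  have hb1 : b < 1 := by rw [hb_def]; linarith
  have hfb : f < b := by rw [hb_def]; linarith
  set M : ℝ := max (1 / (f / 2)) (1 / (1 - b)) with hM_def
  set C : ℝ := |Real.log (1 - b)| with hC_def
  set ε : ℝ := min (f / 2) ((1 - f) / 2) with hε_def
  have hε : 0 < ε := by
    apply lt_min <;> linarith
  have hball : ∀ x ∈ Metric.ball f ε, f / 2 ≤ x ∧ x ≤ b := by
    intro x hx
    rw [Metric.mem_ball, Real.dist_eq, abs_lt] at hx
    have h1 := min_le_left (f / 2) ((1 - f) / 2)
    have h2 := min_le_right (f / 2) ((1 - f) / 2)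
    constructor
    · linarith [hx.1]
    · rw [hb_def]; linarith [hx.2]
  have hxIoo : ∀ x, f / 2 ≤ x → x ≤ b → (0 < x ∧ x < 1) :=
    fun x h1 h2 => ⟨by linarith, by linarith⟩
  -- a.e. positivity within the ball
  have hpos_ball : ∀ᵐ ω ∂P, ∀ x ∈ Metric.ball f ε, 0 < 1 + x * r ω := by
    filter_upwards [h1] with ω hω x hx
    obtain ⟨ha, hbb⟩ := hball x hx
    obtain ⟨h0, h1'⟩ := hxIoo x ha hbb
    exact krl_pos_aux hω h0 h1'
  -- integrability of log(1+f r)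
  have hint_log : Integrable (fun ω => Real.log (1 + f * r ω)) P :=
    (hMem f ⟨hf0, hf1⟩).integrable (by norm_num)
  -- PART 1
  have key1 : Integrable (fun ω => r ω / (1 + f * r ω)) P ∧
      HasDerivAt (fun x => ∫ ω, Real.log (1 + x * r ω) ∂P)
        (∫ ω, r ω / (1 + f * r ω) ∂P) f := by
    apply hasDerivAt_integral_of_dominated_loc_of_deriv_le (Metric.ball_mem_nhds f hε)
      (F := fun x ω => Real.log (1 + x * r ω))
      (F' := fun x ω => r ω / (1 + x * r ω)) (bound := fun _ => M)
      (Eventually.of_forall hmlog) hint_log (hmfrac f) ?_ (integrable_const M) ?_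
    · filter_upwards [h1] with ω hω x hx
      obtain ⟨ha, hbb⟩ := hball x hx
      rw [Real.norm_eq_abs]
      exact krl_frac_bound hω (by linarith : (0:ℝ) < f / 2) hb1 ha hbb
    · filter_upwards [hpos_ball] with ω hω x hx
      exact krl_deriv_log (hω x hx)
  -- PART 2
  have key2 : Integrable (fun ω => -(r ω ^ 2 / (1 + f * r ω) ^ 2)) P ∧
      HasDerivAt (fun x => ∫ ω, r ω / (1 + x * r ω) ∂P)
        (∫ ω, -(r ω ^ 2 / (1 + f * r ω) ^ 2) ∂P) f := by
    apply hasDerivAt_integral_of_dominated_loc_of_deriv_le (Metric.ball_mem_nhds f hε)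
      (F := fun x ω => r ω / (1 + x * r ω))
      (F' := fun x ω => -(r ω ^ 2 / (1 + x * r ω) ^ 2)) (bound := fun _ => M ^ 2)
      (Eventually.of_forall hmfrac) key1.1
      (((hmeas.pow_const 2).div ((measurable_const.add (measurable_const.mul hmeas)).pow_const
        2)).neg.aestronglyMeasurable) ?_ (integrable_const (M ^ 2)) ?_
    · filter_upwards [h1] with ω hω x hx
      obtain ⟨ha, hbb⟩ := hball x hx
      have hfr := krl_frac_bound hω (by linarith : (0:ℝ) < f / 2) hb1 ha hbb
      have : ‖-(r ω ^ 2 / (1 + x * r ω) ^ 2)‖ = |r ω / (1 + x * r ω)| ^ 2 := by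
        rw [norm_neg, Real.norm_eq_abs, ← div_pow, abs_pow]
      rw [this]
      exact pow_le_pow_left₀ (abs_nonneg _) hfr 2
    · filter_upwards [hpos_ball] with ω hω x hx
      exact krl_deriv_frac (hω x hx)
  -- PART 3a : derivative of x ↦ ∫ log(1+x r)^2
  have key3 : Integrable (fun ω => 2 * Real.log (1 + f * r ω) * (r ω / (1 + f * r ω))) P ∧
      HasDerivAt (fun x => ∫ ω, Real.log (1 + x * r ω) ^ 2 ∂P)
        (∫ ω, 2 * Real.log (1 + f * r ω) * (r ω / (1 + f * r ω)) ∂P) f := by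
    apply hasDerivAt_integral_of_dominated_loc_of_deriv_le (Metric.ball_mem_nhds f hε)
      (F := fun x ω => Real.log (1 + x * r ω) ^ 2)
      (F' := fun x ω => 2 * Real.log (1 + x * r ω) * (r ω / (1 + x * r ω)))
      (bound := fun ω => 2 * M * (|Real.log (1 + r ω)| + C))
      (Eventually.of_forall (fun x => (hmlog x).pow 2))
      ((hMem f ⟨hf0, hf1⟩).integrable_sq)
      ((((hmlog f).const_mul 2).mul (hmfrac f))) ?_
      (((hlog1.abs.add (integrable_const C)).const_mul (2 * M))) ?_
    · filter_upwards [h1] with ω hω x hx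
      obtain ⟨ha, hbb⟩ := hball x hx
      obtain ⟨h0, _⟩ := hxIoo x ha hbb
      have hfr := krl_frac_bound hω (by linarith : (0:ℝ) < f / 2) hb1 ha hbb
      have hlb := krl_log_bound hω h0 hbb hb1
      have hM0 : 0 ≤ M := le_trans (by positivity) (le_max_left (1 / (f / 2)) (1 / (1 - b)))
      rw [Real.norm_eq_abs, abs_mul, abs_mul, abs_two]
      nlinarith [abs_nonneg (Real.log (1 + x * r ω)), abs_nonneg (r ω / (1 + x * r ω)),
        abs_nonneg (Real.log (1 + r ω)), abs_nonneg (Real.log (1 - b))]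
    · filter_upwards [hpos_ball] with ω hω x hx
      exact krl_deriv_logsq (hω x hx)
  -- combine for variance
  refine ⟨key1.2, by simpa [integral_neg] using key2.2, ?_⟩
  have D2 : HasDerivAt (fun x => (∫ ω, Real.log (1 + x * r ω) ∂P) ^ 2)
      (2 * (∫ ω, Real.log (1 + f * r ω) ∂P) * (∫ ω, r ω / (1 + f * r ω) ∂P)) f := by
    simpa using key1.2.fun_pow 2
  have D := key3.2.sub D2
  have hEq : (fun x => variance (fun ω => Real.log (1 + x * r ω)) P) =ᶠ[𝓝 f]
      (fun x => (∫ ω, Real.log (1 + x * r ω) ^ 2 ∂P) - (∫ ω, Real.log (1 + x * r ω) ∂P) ^ 2) := by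
    filter_upwards [Ioo_mem_nhds hf0 hf1] with x hx
    rw [variance_eq_sub (hMem x hx)]
    rfl
  refine (D.congr_of_eventuallyEq hEq).congr_deriv ?_
  have : (∫ ω, 2 * Real.log (1 + f * r ω) * (r ω / (1 + f * r ω)) ∂P)
      = 2 * ∫ ω, r ω * Real.log (1 + f * r ω) / (1 + f * r ω) ∂P := by
    rw [← integral_const_mul]
    apply integral_congr_ae
    exact Eventually.of_forall (fun ω => by ring)
  rw [this]; ring
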